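/- Let g be twice continuously differentiable on [a,b], and let m = min_{t∈[a,b]} g''(t), M = max_{t∈[a,b]} g''(t). Then for x_1,...,x_n ∈ [a,b] and positive weights p_i with ∑p_i = 1, (m/2)[∑p_i x_i² − (∑p_i x_i)²] ≤ ∑ p_i g(x_i) − g(∑ p_i x_i) ≤ (M/2)[∑p_i x_i² − (∑p_i x_i)²]. -/

import Mathlib

lemma jensen_aux
    (n : ℕ) (a b c : ℝ)
    (g g' g'' : ℝ → ℝ)
    (hg' : ∀ t ∈ Set.Icc a b, HasDerivAt g (g' t) t)
    (hg'' : ∀ t ∈ Set.Icc a b, HasDerivAt g' (g'' t) t)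
    (hc : ∀ t ∈ Set.Icc a b, c ≤ g'' t)
    (p x : Fin n → ℝ)
    (hp : ∀ i, 0 < p i) (hps : ∑ i, p i = 1)
    (hx : ∀ i, x i ∈ Set.Icc a b) :
    (c / 2) * (∑ i, p i * (x i) ^ 2 - (∑ i, p i * x i) ^ 2) ≤
      ∑ i, p i * g (x i) - g (∑ i, p i * x i) := by
  have hDconv : Convex ℝ (Set.Icc a b) := convex_Icc a b
  have hInt : interior (Set.Icc a b) ⊆ Set.Icc a b := interior_subset
  have hgcont : ContinuousOn g (Set.Icc a b) :=
    fun t ht => (hg' t ht).continuousAt.continuousWithinAt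
  set h : ℝ → ℝ := fun t => g t - c / 2 * t ^ 2 with hh
  have hconv : ConvexOn ℝ (Set.Icc a b) h := by
    apply convexOn_of_hasDerivWithinAt2_nonneg hDconv
      (f' := fun t => g' t - c * t) (f'' := fun t => g'' t - c)
    · exact hgcont.sub (continuousOn_const.mul (continuousOn_pow 2))
    · intro t ht
      have h1 := hg' t (hInt ht)
      have h2 : HasDerivAt (fun t : ℝ => c / 2 * t ^ 2) (c / 2 * (2 * t)) t := by
        simpa using ((hasDerivAt_pow 2 t).const_mul (c / 2))
      have h3 := h1.sub h2
      have : HasDerivAt h (g' t - c * t) t := by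
        exact h3.congr_deriv (by ring)
      exact this.hasDerivWithinAt
    · intro t ht
      have h1 := hg'' t (hInt ht)
      have h2 : HasDerivAt (fun t : ℝ => c * t) c t := by
        simpa using (hasDerivAt_id t).const_mul c
      exact (h1.sub h2).hasDerivWithinAt
    · intro t ht
      have := hc t (hInt ht)
      linarith
  have hjen := hconv.map_sum_le (t := Finset.univ) (w := p) (p := x)
    (fun i _ => (hp i).le) (by simpa using hps) (fun i _ => hx i)
  simp only [smul_eq_mul, hh] at hjen
  have hsum : ∑ i, p i * (g (x i) - c / 2 * (x i) ^ 2)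
      = ∑ i, p i * g (x i) - c / 2 * ∑ i, p i * (x i) ^ 2 := by
    rw [Finset.mul_sum, ← Finset.sum_sub_distrib]
    congr 1; ext i; ring
  rw [hsum] at hjen
  nlinarith [hjen]

theorem jensen_nonconvex
    (n : ℕ) (a b m M : ℝ) (hab : a ≤ b)
    (g g' g'' : ℝ → ℝ)
    (hg' : ∀ t ∈ Set.Icc a b, HasDerivAt g (g' t) t)
    (hg'' : ∀ t ∈ Set.Icc a b, HasDerivAt g' (g'' t) t)
    (hgc : ContinuousOn g'' (Set.Icc a b))
    (hm : ∀ t ∈ Set.Icc a b, m ≤ g'' t) (hm' : ∃ t ∈ Set.Icc a b, g'' t = m)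
    (hM : ∀ t ∈ Set.Icc a b, g'' t ≤ M) (hM' : ∃ t ∈ Set.Icc a b, g'' t = M)
    (p x : Fin n → ℝ)
    (hp : ∀ i, 0 < p i) (hps : ∑ i, p i = 1)
    (hx : ∀ i, x i ∈ Set.Icc a b) :
    (m / 2) * (∑ i, p i * (x i) ^ 2 - (∑ i, p i * x i) ^ 2) ≤
        ∑ i, p i * g (x i) - g (∑ i, p i * x i) ∧
      ∑ i, p i * g (x i) - g (∑ i, p i * x i) ≤
        (M / 2) * (∑ i, p i * (x i) ^ 2 - (∑ i, p i * x i) ^ 2) := by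
  constructor
  · exact jensen_aux n a b m g g' g'' hg' hg'' hm p x hp hps hx
  · have h2 := jensen_aux n a b (-M) (fun t => -g t) (fun t => -g' t) (fun t => -g'' t)
      (fun t ht => (hg' t ht).neg) (fun t ht => (hg'' t ht).neg)
      (fun t ht => by simpa using neg_le_neg (hM t ht)) p x hp hps hx
    simp only [mul_neg, Finset.sum_neg_distrib] at h2
    nlinarith [h2]
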